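/- arXiv:2003.03616 — 3 statements merged into one kernel-verified Lean document; each statement's English description precedes it below -/
import Mathlib

section
/- Let P and S be n×n row-stochastic matrices, and suppose S is diagonalizable as S = Z D̃ Z^{-1} with D̃ diagonal having exactly K diagonal entries equal to 1 and remaining diagonal entries of modulus at most |λ_{K+1}| < 1. Let S^∞ = Z E Z^{-1} where E keeps the unit eigenvalues and zeroes out the rest. Then for every t ≥ 1, ‖P^t − S^∞‖_∞ ≤ δt + κ|λ_{K+1}|^t, where δ = ‖P − S‖_∞ and κ = ‖Z‖_∞‖Z^{-1}‖_∞. -/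
open Matrix

/-- The maximum absolute row sum norm of a matrix. -/
noncomputable def infNorm {n : ℕ} (M : Matrix (Fin n) (Fin n) ℝ) : ℝ :=
  ⨆ i, ∑ j, |M i j|

section aux

attribute [local instance] Matrix.linftyOpNormedRing

lemma infNorm_eq_norm {n : ℕ} (M : Matrix (Fin n) (Fin n) ℝ) : infNorm M = ‖M‖ := by
  rw [Matrix.linfty_opNorm_def, Finset.sup_univ_eq_ciSup, NNReal.coe_iSup]
  unfold infNorm
  congr 1
  ext i
  push_cast
  simp [Real.norm_eq_abs]

end aux

/-- For row-stochastic `P, S` with `S = Z D̃ Z⁻¹` diagonalizable with exactly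
`K` unit eigenvalues and the rest of modulus at most `|λ| < 1`, and `S^∞ = Z E Z⁻¹`,
`‖P^t - S^∞‖_∞ ≤ δ t + κ |λ|^t` with `δ = ‖P - S‖_∞`, `κ = ‖Z‖_∞ ‖Z⁻¹‖_∞`. -/
theorem mesoscopic_equilibrium_bound {n K : ℕ} (P S Z Zinv : Matrix (Fin n) (Fin n) ℝ)
    (hPnonneg : ∀ i j, 0 ≤ P i j) (hProw : ∀ i, ∑ j, P i j = 1)
    (hSnonneg : ∀ i j, 0 ≤ S i j) (hSrow : ∀ i, ∑ j, S i j = 1)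
    (hZ : Z * Zinv = 1) (hZ' : Zinv * Z = 1)
    (d : Fin n → ℝ) (lam : ℝ) (hlam : |lam| < 1)
    (hd1 : ∀ ℓ : Fin n, ((ℓ : ℕ) < K ↔ d ℓ = 1))
    (hd2 : ∀ ℓ : Fin n, K ≤ (ℓ : ℕ) → |d ℓ| ≤ |lam|)
    (hS : S = Z * Matrix.diagonal d * Zinv)
    (Sinf : Matrix (Fin n) (Fin n) ℝ)
    (hSinf : Sinf = Z * Matrix.diagonal (fun ℓ : Fin n => if (ℓ : ℕ) < K then (1 : ℝ) else 0) * Zinv)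
    (t : ℕ) (ht : 1 ≤ t) :
    infNorm (P ^ t - Sinf) ≤
      infNorm (P - S) * (t : ℝ) + (infNorm Z * infNorm Zinv) * |lam| ^ t := by
  letI : NormedRing (Matrix (Fin n) (Fin n) ℝ) := Matrix.linftyOpNormedRing
  simp only [infNorm_eq_norm]
  -- norms of stochastic matrices ≤ 1
  have hnorm_le_one : ∀ (M : Matrix (Fin n) (Fin n) ℝ), (∀ i j, 0 ≤ M i j) →
      (∀ i, ∑ j, M i j = 1) → ‖M‖ ≤ 1 := by
    intro M hnn hrow
    rw [← infNorm_eq_norm, infNorm]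
    apply Real.iSup_le
    · intro i
      rw [← hrow i]
      exact le_of_eq (Finset.sum_congr rfl fun j _ => abs_of_nonneg (hnn i j))
    · norm_num
  have hone : ‖(1 : Matrix (Fin n) (Fin n) ℝ)‖ ≤ 1 := by
    rw [← Matrix.diagonal_one, Matrix.linfty_opNorm_diagonal]
    apply pi_norm_le_iff_of_nonneg zero_le_one |>.2
    intro i; simp
  have hP1 : ‖P‖ ≤ 1 := hnorm_le_one P hPnonneg hProw
  have hS1 : ‖S‖ ≤ 1 := hnorm_le_one S hSnonneg hSrow
  have hpow : ∀ (M : Matrix (Fin n) (Fin n) ℝ), ‖M‖ ≤ 1 → ∀ k, ‖M ^ k‖ ≤ 1 := by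
    intro M hM k
    induction k with
    | zero => rw [pow_zero]; exact hone
    | succ k ih =>
      calc ‖M ^ (k+1)‖ = ‖M * M ^ k‖ := by rw [pow_succ']
        _ ≤ ‖M‖ * ‖M ^ k‖ := norm_mul_le _ _
        _ ≤ 1 * 1 := mul_le_mul hM ih (norm_nonneg _) zero_le_one
        _ = 1 := by ring
  -- telescoping bound
  have htel : ∀ k : ℕ, ‖P ^ k - S ^ k‖ ≤ ‖P - S‖ * k := by
    intro k
    induction k with
    | zero => simp
    | succ k ih =>
      have key : P ^ (k+1) - S ^ (k+1) = P * (P ^ k - S ^ k) + (P - S) * S ^ k := by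
        rw [pow_succ', pow_succ']; noncomm_ring
      calc ‖P ^ (k+1) - S ^ (k+1)‖ = ‖P * (P ^ k - S ^ k) + (P - S) * S ^ k‖ := by rw [key]
        _ ≤ ‖P * (P ^ k - S ^ k)‖ + ‖(P - S) * S ^ k‖ := norm_add_le _ _
        _ ≤ ‖P‖ * ‖P ^ k - S ^ k‖ + ‖P - S‖ * ‖S ^ k‖ :=
            add_le_add (norm_mul_le _ _) (norm_mul_le _ _)
        _ ≤ 1 * (‖P - S‖ * k) + ‖P - S‖ * 1 := by
            apply add_le_add
            · exact mul_le_mul hP1 ih (norm_nonneg _) zero_le_one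
            · exact mul_le_mul_of_nonneg_left (hpow S hS1 k) (norm_nonneg _)
        _ = ‖P - S‖ * (k + 1 : ℕ) := by push_cast; ring
  -- S ^ k = Z * (diagonal d) ^ k * Zinv
  have hSpow : ∀ k : ℕ, 1 ≤ k → S ^ k = Z * (Matrix.diagonal d) ^ k * Zinv := by
    intro k hk
    induction k with
    | zero => omega
    | succ k ih =>
      rcases Nat.eq_zero_or_pos k with hk0 | hk0
      · subst hk0; simpa using hS
      · rw [pow_succ, pow_succ, ih hk0, hS]
        have : Zinv * (Z * Matrix.diagonal d * Zinv) = Matrix.diagonal d * Zinv := by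
          rw [← Matrix.mul_assoc, ← Matrix.mul_assoc, hZ', Matrix.one_mul]
        rw [Matrix.mul_assoc (Z * Matrix.diagonal d ^ k), this]
        noncomm_ring
  -- bound on S^t - Sinf
  have hdiag : S ^ t - Sinf =
      Z * Matrix.diagonal (fun ℓ => d ℓ ^ t - if (ℓ : ℕ) < K then (1:ℝ) else 0) * Zinv := by
    rw [hSpow t ht, hSinf, Matrix.diagonal_pow]
    rw [← Matrix.sub_mul, ← Matrix.mul_sub, Matrix.diagonal_sub]
    rfl
  have hdiagnorm : ‖Matrix.diagonal (fun ℓ => d ℓ ^ t - if (ℓ : ℕ) < K then (1:ℝ) else 0)‖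
      ≤ |lam| ^ t := by
    rw [Matrix.linfty_opNorm_diagonal]
    apply pi_norm_le_iff_of_nonneg (by positivity) |>.2
    intro ℓ
    by_cases h : (ℓ : ℕ) < K
    · rw [if_pos h, (hd1 ℓ).1 h, one_pow, sub_self, norm_zero]
      positivity
    · simp only [h, if_false, sub_zero, Real.norm_eq_abs, abs_pow]
      exact pow_le_pow_left₀ (abs_nonneg _) (hd2 ℓ (le_of_not_gt h)) t
  have hSinf_bound : ‖S ^ t - Sinf‖ ≤ ‖Z‖ * ‖Zinv‖ * |lam| ^ t := by
    rw [hdiag]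
    calc ‖Z * Matrix.diagonal _ * Zinv‖ ≤ ‖Z * Matrix.diagonal _‖ * ‖Zinv‖ := norm_mul_le _ _
      _ ≤ ‖Z‖ * ‖Matrix.diagonal _‖ * ‖Zinv‖ :=
          mul_le_mul_of_nonneg_right (norm_mul_le _ _) (norm_nonneg _)
      _ ≤ ‖Z‖ * |lam| ^ t * ‖Zinv‖ := by
          apply mul_le_mul_of_nonneg_right _ (norm_nonneg _)
          exact mul_le_mul_of_nonneg_left hdiagnorm (norm_nonneg _)
      _ = ‖Z‖ * ‖Zinv‖ * |lam| ^ t := by ring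
  calc ‖P ^ t - Sinf‖ = ‖(P ^ t - S ^ t) + (S ^ t - Sinf)‖ := by rw [sub_add_sub_cancel]
    _ ≤ ‖P ^ t - S ^ t‖ + ‖S ^ t - Sinf‖ := norm_add_le _ _
    _ ≤ ‖P - S‖ * t + ‖Z‖ * ‖Zinv‖ * |lam| ^ t := add_le_add (htel t) hSinf_bound
end

section
/- If additionally there exists T_* such that (e_i − e_j) S_{r(t)}^∞ = 0 for all t > T_* (i.e., x_i and x_j lie in the same cluster at all scales r(t) with t > T_*), then ‖∑_{t=1}^∞ (e_i − e_j) P^t‖_1 ≤ ‖∑_{t=1}^{T_*} (e_i − e_j) S_{r(t)}^∞‖_1 + 2∑_{t=1}^∞ (δ_{r(t)} t + κ_{r(t)} |λ_{r(t)}^*|^t), and the analogous lower bound holds with a minus sign. -/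
open Matrix

lemma vecMul_diff {n : ℕ} (M : Matrix (Fin n) (Fin n) ℝ) (i j ℓ : Fin n) :
    ((Pi.single i 1 - Pi.single j 1 : Fin n → ℝ) ᵥ* M) ℓ = M i ℓ - M j ℓ := by
  simp [vecMul, dotProduct, sub_mul, Finset.sum_sub_distrib, Pi.single_apply, ite_mul]

lemma sum_abs_vecMul_le {n : ℕ} (M : Matrix (Fin n) (Fin n) ℝ) (i j : Fin n) :
    ∑ ℓ, |((Pi.single i 1 - Pi.single j 1 : Fin n → ℝ) ᵥ* M) ℓ| ≤ 2 * infNorm M := by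
  have h1 : ∀ k : Fin n, ∑ ℓ, |M k ℓ| ≤ infNorm M := fun k =>
    le_ciSup (Set.Finite.bddAbove (Set.finite_range (fun k => ∑ ℓ, |M k ℓ|))) k
  calc ∑ ℓ, |((Pi.single i 1 - Pi.single j 1 : Fin n → ℝ) ᵥ* M) ℓ|
      ≤ ∑ ℓ, (|M i ℓ| + |M j ℓ|) := by
        refine Finset.sum_le_sum fun ℓ _ => ?_
        rw [vecMul_diff]
        exact abs_sub _ _
    _ = (∑ ℓ, |M i ℓ|) + ∑ ℓ, |M j ℓ| := Finset.sum_add_distrib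
    _ ≤ infNorm M + infNorm M := add_le_add (h1 i) (h1 j)
    _ = 2 * infNorm M := by ring

/-- If `(e_i - e_j) S_{r(t)}^∞ = 0` for all `t > T_*`, then
`‖∑_{t≥1}(e_i-e_j)P^t‖₁ ≤ ‖∑_{t=1}^{T_*}(e_i-e_j)S_{r(t)}^∞‖₁ + 2∑_{t≥1}(δ_{r(t)}t + κ_{r(t)}|λ_{r(t)}|^t)`,
along with the analogous lower bound. -/
theorem multitemporal_same_cluster_bound {n R : ℕ} (P : Matrix (Fin n) (Fin n) ℝ)
    (hPnonneg : ∀ i j, 0 ≤ P i j) (hProw : ∀ i, ∑ j, P i j = 1)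
    (Sinf : Fin R → Matrix (Fin n) (Fin n) ℝ) (r : ℕ → Fin R)
    (δ κ lam : Fin R → ℝ)
    (hδ : ∀ k, 0 ≤ δ k) (hκ : ∀ k, 0 ≤ κ k) (hlam : ∀ k, |lam k| < 1)
    (hbound : ∀ t : ℕ, 1 ≤ t →
      infNorm (P ^ t - Sinf (r t)) ≤ δ (r t) * t + κ (r t) * |lam (r t)| ^ t)
    (hsum : Summable (fun t : ℕ =>
      δ (r (t + 1)) * (t + 1 : ℕ) + κ (r (t + 1)) * |lam (r (t + 1))| ^ (t + 1)))
    (i j : Fin n) (Tstar : ℕ)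
    (hsame : ∀ t : ℕ, Tstar < t →
      (Pi.single i 1 - Pi.single j 1 : Fin n → ℝ) ᵥ* Sinf (r t) = 0)
    (A : Fin n → ℝ)
    (hA : HasSum (fun t : ℕ =>
      (Pi.single i 1 - Pi.single j 1 : Fin n → ℝ) ᵥ* P ^ (t + 1)) A) :
    (∑ ℓ, |A ℓ| ≤
      (∑ ℓ, |(∑ t ∈ Finset.Icc 1 Tstar,
        (Pi.single i 1 - Pi.single j 1 : Fin n → ℝ) ᵥ* Sinf (r t)) ℓ|) +
      2 * ∑' t : ℕ,
        (δ (r (t + 1)) * (t + 1 : ℕ) + κ (r (t + 1)) * |lam (r (t + 1))| ^ (t + 1))) ∧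
    (∑ ℓ, |A ℓ| ≥
      (∑ ℓ, |(∑ t ∈ Finset.Icc 1 Tstar,
        (Pi.single i 1 - Pi.single j 1 : Fin n → ℝ) ᵥ* Sinf (r t)) ℓ|) -
      2 * ∑' t : ℕ,
        (δ (r (t + 1)) * (t + 1 : ℕ) + κ (r (t + 1)) * |lam (r (t + 1))| ^ (t + 1))) := by
  
  set v : Fin n → ℝ := Pi.single i 1 - Pi.single j 1 with hv
  set ε : ℕ → ℝ := fun t =>
    δ (r (t + 1)) * (t + 1 : ℕ) + κ (r (t + 1)) * |lam (r (t + 1))| ^ (t + 1) with hε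
  set B : Fin n → ℝ := ∑ t ∈ Finset.Icc 1 Tstar, v ᵥ* Sinf (r t) with hBdef
  set g : ℕ → Fin n → ℝ := fun t => v ᵥ* (P ^ (t + 1) - Sinf (r (t + 1))) with hgdef
  set h : ℕ → Fin n → ℝ := fun t => v ᵥ* Sinf (r (t + 1)) with hhdef
  have hε0 : ∀ t, 0 ≤ ε t := fun t =>
    add_nonneg (mul_nonneg (hδ _) (by positivity))
      (mul_nonneg (hκ _) (pow_nonneg (abs_nonneg _) _))
  have hgb : ∀ t, ∑ ℓ, |g t ℓ| ≤ 2 * ε t := by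
    intro t
    refine le_trans (sum_abs_vecMul_le _ i j) ?_
    have := hbound (t + 1) (by omega)
    have h2 : (0:ℝ) ≤ 2 := by norm_num
    calc 2 * infNorm (P ^ (t+1) - Sinf (r (t+1)))
        ≤ 2 * (δ (r (t+1)) * (t+1 : ℕ) + κ (r (t+1)) * |lam (r (t+1))| ^ (t+1)) :=
          mul_le_mul_of_nonneg_left (by exact_mod_cast this) h2
      _ = 2 * ε t := rfl
  -- h has finite support, sums to B
  have hh0 : ∀ t ∉ Finset.range Tstar, h t = 0 := by
    intro t ht
    simp only [Finset.mem_range, not_lt] at ht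
    exact hsame (t + 1) (by omega)
  have hB : HasSum h B := by
    have : HasSum h (∑ b ∈ Finset.range Tstar, h b) := hasSum_sum_of_ne_finset_zero hh0
    convert this using 1
    rw [hBdef, show Finset.Icc 1 Tstar = Finset.Ico 1 (Tstar + 1) from
      (Finset.Ico_add_one_right_eq_Icc 1 Tstar).symm, Finset.sum_Ico_eq_sum_range]
    simp only [Nat.add_sub_cancel]
    exact Finset.sum_congr rfl fun t _ => by rw [add_comm 1 t]
  have hg : HasSum g (A - B) := by
    have := hA.sub hB
    convert this using 1
    · rfl
    funext t
    rw [hgdef]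
    simp [Matrix.vecMul_sub]
    rfl
  have hgℓ : ∀ ℓ, HasSum (fun t => g t ℓ) ((A - B) ℓ) := fun ℓ => Pi.hasSum.mp hg ℓ
  have hle : ∀ t ℓ, |g t ℓ| ≤ 2 * ε t := fun t ℓ =>
    le_trans (Finset.single_le_sum (f := fun ℓ' => |g t ℓ'|)
      (fun _ _ => abs_nonneg _) (Finset.mem_univ ℓ)) (hgb t)
  have hSa : ∀ ℓ, Summable (fun t => |g t ℓ|) := fun ℓ =>
    Summable.of_nonneg_of_le (fun t => abs_nonneg _) (fun t => hle t ℓ) (hsum.mul_left 2)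
  have habs : ∀ ℓ, |(A - B) ℓ| ≤ ∑' t, |g t ℓ| := by
    intro ℓ
    rw [← (hgℓ ℓ).tsum_eq]
    simpa [Real.norm_eq_abs] using norm_tsum_le_tsum_norm (f := fun t => g t ℓ)
      (by simpa [Real.norm_eq_abs] using hSa ℓ)
  have key : ∑ ℓ, |A ℓ - B ℓ| ≤ 2 * ∑' t, ε t := by
    calc ∑ ℓ, |A ℓ - B ℓ| ≤ ∑ ℓ, ∑' t, |g t ℓ| := by
          refine Finset.sum_le_sum fun ℓ _ => ?_
          simpa using habs ℓ
      _ = ∑' t, ∑ ℓ, |g t ℓ| := (Summable.tsum_finsetSum (fun ℓ _ => hSa ℓ)).symm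
      _ ≤ ∑' t, 2 * ε t := Summable.tsum_le_tsum hgb
          (summable_sum fun ℓ _ => hSa ℓ) (hsum.mul_left 2)
      _ = 2 * ∑' t, ε t := tsum_mul_left
  have h1 : ∑ ℓ, |A ℓ| ≤ (∑ ℓ, |B ℓ|) + ∑ ℓ, |A ℓ - B ℓ| := by
    rw [← Finset.sum_add_distrib]
    refine Finset.sum_le_sum fun ℓ _ => ?_
    have := abs_sub_abs_le_abs_sub (A ℓ) (B ℓ)
    linarith [abs_nonneg (A ℓ - B ℓ)]
  have h2 : ∑ ℓ, |B ℓ| ≤ (∑ ℓ, |A ℓ|) + ∑ ℓ, |A ℓ - B ℓ| := by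
    rw [← Finset.sum_add_distrib]
    refine Finset.sum_le_sum fun ℓ _ => ?_
    have := abs_sub_abs_le_abs_sub (B ℓ) (A ℓ)
    rw [abs_sub_comm] at this
    linarith
  constructor
  · linarith
  · linarith
end

section
/- Let P ∈ ℝ^{n×n} be a Markov matrix of the form P = D^{-1}W with W symmetric with positive diagonal entries and D the diagonal degree matrix. Write the spectral decomposition of the symmetric matrix D^{-1/2}WD^{-1/2} as ∑_ℓ λ_ℓ φ_ℓ φ_ℓ^⊤ with orthonormal eigenvectors φ_ℓ and eigenvalues 1 = λ_1 > |λ_2| ≥ … ≥ |λ_n| ≥ 0. Let π be the stationary distribution, ψ_ℓ = φ_ℓ/√π (entrywise) and ϕ_ℓ = φ_ℓ·√π (entrywise). Then the diffusion state distance with weight w = 1/π satisfies 𝒟(x_i, x_j) = ‖(e_i − e_j)∑_{t=0}^∞ P^t‖_{ℓ²(1/π)} = sqrt( ∑_{ℓ=2}^n (1/(1−λ_ℓ))² (ψ_ℓ(x_i) − ψ_ℓ(x_j))² ). -/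
open Matrix

/-- spectral formula for the diffusion state distance with weight `1/π`:
`𝒟(x_i,x_j) = ‖(e_i-e_j)∑_{t≥0}P^t‖_{ℓ²(1/π)} = sqrt(∑_{ℓ≥2} (1/(1-λ_ℓ))²(ψ_ℓ(x_i)-ψ_ℓ(x_j))²)`. -/
theorem dsd_spectral_formula {n : ℕ} (W : Matrix (Fin (n + 1)) (Fin (n + 1)) ℝ)
    (hWsymm : ∀ i j, W i j = W j i) (hWnonneg : ∀ i j, 0 ≤ W i j)
    (d : Fin (n + 1) → ℝ) (hd : ∀ i, d i = ∑ j, W i j) (hdpos : ∀ i, 0 < d i)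
    (P : Matrix (Fin (n + 1)) (Fin (n + 1)) ℝ) (hP : ∀ i j, P i j = W i j / d i)
    (π : Fin (n + 1) → ℝ) (hπ : ∀ i, π i = d i / ∑ k, d k)
    (lam : Fin (n + 1) → ℝ) (φ : Fin (n + 1) → Fin (n + 1) → ℝ)
    (horth : ∀ k l, ∑ x, φ k x * φ l x = if k = l then (1 : ℝ) else 0)
    (hdecomp : ∀ i j, W i j / (Real.sqrt (d i) * Real.sqrt (d j)) =
      ∑ ℓ, lam ℓ * φ ℓ i * φ ℓ j)
    (hlam1 : lam 0 = 1) (hlam : ∀ ℓ : Fin (n + 1), ℓ ≠ 0 → |lam ℓ| < 1)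
    (hφ1 : ∀ x, φ 0 x = Real.sqrt (π x))
    (ψ : Fin (n + 1) → Fin (n + 1) → ℝ)
    (hψ : ∀ ℓ x, ψ ℓ x = φ ℓ x / Real.sqrt (π x))
    (i j : Fin (n + 1)) :
    ∃ v : Fin (n + 1) → ℝ,
      HasSum (fun t : ℕ =>
        (Pi.single i 1 - Pi.single j 1 : Fin (n + 1) → ℝ) ᵥ* P ^ t) v ∧
      Real.sqrt (∑ k, (v k) ^ 2 * (1 / π k)) =
        Real.sqrt (∑ ℓ ∈ Finset.univ.erase 0,
          (1 / (1 - lam ℓ)) ^ 2 * (ψ ℓ i - ψ ℓ j) ^ 2) := by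
  classical
  set S := ∑ k, d k with hS
  have hSpos : 0 < S := Finset.sum_pos (fun k _ => hdpos k) Finset.univ_nonempty
  have hsS : 0 < Real.sqrt S := Real.sqrt_pos.2 hSpos
  have hsd : ∀ x, (0:ℝ) < Real.sqrt (d x) := fun x => Real.sqrt_pos.2 (hdpos x)
  have hπpos : ∀ x, 0 < π x := fun x => by rw [hπ x]; exact div_pos (hdpos x) hSpos
  have hsqrtπ : ∀ x, Real.sqrt (π x) = Real.sqrt (d x) / Real.sqrt S := by
    intro x; rw [hπ x, Real.sqrt_div (hdpos x).le]
  have hcomp : ∀ x y, ∑ ℓ, φ ℓ x * φ ℓ y = if x = y then (1:ℝ) else 0 := by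
    have h1 : (Matrix.of φ) * (Matrix.of φ)ᵀ = 1 := by
      ext k l
      simp only [Matrix.mul_apply, Matrix.transpose_apply, Matrix.of_apply, Matrix.one_apply]
      exact horth k l
    have h2 := mul_eq_one_comm.mp h1
    intro x y
    have := congrFun (congrFun h2 x) y
    simpa [Matrix.mul_apply, Matrix.transpose_apply, Matrix.one_apply, mul_comm] using this
  set b : Fin (n+1) → ℝ := fun ℓ => φ ℓ i / Real.sqrt (d i) - φ ℓ j / Real.sqrt (d j)
    with hbdef
  have hb0 : b 0 = 0 := by
    simp only [hbdef, hφ1, hsqrtπ]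
    field_simp
    rw [div_self (hsd i).ne', div_self (hsd j).ne', sub_self, mul_zero]
  have hψb : ∀ ℓ, ψ ℓ i - ψ ℓ j = Real.sqrt S * b ℓ := by
    intro ℓ
    rw [hψ, hψ, hsqrtπ, hsqrtπ, hbdef]
    field_simp
  have hWφ : ∀ ℓ k, ∑ m, φ ℓ m * (W m k / Real.sqrt (d m))
      = lam ℓ * (φ ℓ k * Real.sqrt (d k)) := by
    intro ℓ k
    have step : ∀ m, φ ℓ m * (W m k / Real.sqrt (d m))
        = ∑ ℓ', (lam ℓ' * φ ℓ' k * Real.sqrt (d k)) * (φ ℓ m * φ ℓ' m) := by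
      intro m
      have h1 : W m k / Real.sqrt (d m)
          = (W m k / (Real.sqrt (d m) * Real.sqrt (d k))) * Real.sqrt (d k) := by
        rw [div_mul_eq_div_div, div_mul_cancel₀ _ (hsd k).ne']
      rw [h1, hdecomp m k, Finset.sum_mul, Finset.mul_sum]
      exact Finset.sum_congr rfl fun ℓ' _ => by ring
    simp only [step]
    rw [Finset.sum_comm]
    have key : ∀ ℓ', ∑ m, (lam ℓ' * φ ℓ' k * Real.sqrt (d k)) * (φ ℓ m * φ ℓ' m)
        = if ℓ = ℓ' then lam ℓ' * φ ℓ' k * Real.sqrt (d k) else 0 := by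
      intro ℓ'
      rw [← Finset.mul_sum, horth]
      split <;> simp
    simp only [key]
    rw [Finset.sum_ite_eq]
    simp [mul_assoc]
  have hPt : ∀ t, ∀ k, ((Pi.single i 1 - Pi.single j 1 : Fin (n+1) → ℝ) ᵥ* P ^ t) k
      = ∑ ℓ, lam ℓ ^ t * b ℓ * (φ ℓ k * Real.sqrt (d k)) := by
    intro t
    induction t with
    | zero =>
      intro k
      rw [pow_zero, Matrix.vecMul_one]
      have e : ∀ ℓ : Fin (n+1), lam ℓ ^ 0 * b ℓ * (φ ℓ k * Real.sqrt (d k))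
          = φ ℓ i * φ ℓ k * (Real.sqrt (d k) / Real.sqrt (d i))
            - φ ℓ j * φ ℓ k * (Real.sqrt (d k) / Real.sqrt (d j)) := by
        intro ℓ; simp only [hbdef, pow_zero]; ring
      rw [Finset.sum_congr rfl fun ℓ _ => e ℓ, Finset.sum_sub_distrib,
        ← Finset.sum_mul, ← Finset.sum_mul, hcomp, hcomp, Pi.sub_apply]
      by_cases hik : i = k <;> by_cases hjk : j = k <;>
        simp [hik, hjk, Pi.single_apply, div_self (hsd k).ne']
    | succ t ih =>
      intro k
      rw [pow_succ, ← Matrix.vecMul_vecMul]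
      have expand : ((Pi.single i 1 - Pi.single j 1 : Fin (n+1) → ℝ) ᵥ* P ^ t ᵥ* P) k
          = ∑ m, ((Pi.single i 1 - Pi.single j 1 : Fin (n+1) → ℝ) ᵥ* P ^ t) m * P m k := by
        simp [Matrix.vecMul, dotProduct]
      rw [expand]
      have key : ∀ m, ((Pi.single i 1 - Pi.single j 1 : Fin (n+1) → ℝ) ᵥ* P ^ t) m * P m k
          = ∑ ℓ, lam ℓ ^ t * b ℓ * (φ ℓ m * (W m k / Real.sqrt (d m))) := by
        intro m
        rw [ih m, hP m k, Finset.sum_mul]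
        refine Finset.sum_congr rfl fun ℓ _ => ?_
        have h2 : Real.sqrt (d m) * (W m k / d m) = W m k / Real.sqrt (d m) := by
          rw [eq_div_iff (hsd m).ne', mul_right_comm, Real.mul_self_sqrt (hdpos m).le,
            mul_comm (d m), div_mul_cancel₀ _ (hdpos m).ne']
        calc lam ℓ ^ t * b ℓ * (φ ℓ m * Real.sqrt (d m)) * (W m k / d m)
            = lam ℓ ^ t * b ℓ * (φ ℓ m * (Real.sqrt (d m) * (W m k / d m))) := by ring
          _ = _ := by rw [h2]
      simp only [key]
      rw [Finset.sum_comm]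
      refine Finset.sum_congr rfl fun ℓ _ => ?_
      rw [← Finset.mul_sum, hWφ ℓ k, pow_succ]
      ring
  refine ⟨fun k => ∑ ℓ, 1/(1 - lam ℓ) * b ℓ * (φ ℓ k * Real.sqrt (d k)), ?_, ?_⟩
  · rw [Pi.hasSum]
    intro k
    simp only [hPt]
    apply hasSum_sum
    intro ℓ _
    by_cases h0 : ℓ = 0
    · subst h0
      simp only [hb0, mul_zero, zero_mul, mul_assoc]
      simpa using hasSum_zero
    · have h := (hasSum_geometric_of_abs_lt_one (hlam ℓ h0)).mul_right
        (b ℓ * (φ ℓ k * Real.sqrt (d k)))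
      simpa [mul_assoc, one_div] using h
  · congr 1
    set a : Fin (n+1) → ℝ := fun ℓ => 1/(1 - lam ℓ) * b ℓ with ha
    have ha0 : a 0 = 0 := by simp [ha, hb0]
    have hLHS : ∀ k, (∑ ℓ, 1/(1 - lam ℓ) * b ℓ * (φ ℓ k * Real.sqrt (d k))) ^ 2 * (1 / π k)
        = S * (∑ ℓ, a ℓ * φ ℓ k) ^ 2 := by
      intro k
      have hvk : (∑ ℓ, 1/(1 - lam ℓ) * b ℓ * (φ ℓ k * Real.sqrt (d k)))
          = Real.sqrt (d k) * ∑ ℓ, a ℓ * φ ℓ k := by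
        rw [Finset.mul_sum]
        exact Finset.sum_congr rfl fun ℓ _ => by simp only [ha]; ring
      rw [hvk, hπ k, mul_pow, Real.sq_sqrt (hdpos k).le, one_div_div]
      have hc : d k * (S / d k) = S := by
        rw [mul_comm, div_mul_cancel₀ _ (hdpos k).ne']
      calc d k * (∑ ℓ, a ℓ * φ ℓ k) ^ 2 * (S / d k)
          = d k * (S / d k) * (∑ ℓ, a ℓ * φ ℓ k) ^ 2 := by ring
        _ = S * (∑ ℓ, a ℓ * φ ℓ k) ^ 2 := by rw [hc]
    simp only [hLHS]
    rw [← Finset.mul_sum]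
    have horthsum : ∑ k, (∑ ℓ, a ℓ * φ ℓ k) ^ 2 = ∑ ℓ, a ℓ ^ 2 := by
      have e : ∀ k, (∑ ℓ, a ℓ * φ ℓ k) ^ 2
          = ∑ ℓ, ∑ ℓ', (a ℓ * a ℓ') * (φ ℓ k * φ ℓ' k) := by
        intro k
        rw [sq, Finset.sum_mul_sum]
        exact Finset.sum_congr rfl fun ℓ _ =>
          Finset.sum_congr rfl fun ℓ' _ => by ring
      simp only [e]
      rw [Finset.sum_comm]
      refine Finset.sum_congr rfl fun ℓ _ => ?_
      rw [Finset.sum_comm]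
      have key : ∀ ℓ', ∑ k, a ℓ * a ℓ' * (φ ℓ k * φ ℓ' k)
          = if ℓ = ℓ' then a ℓ * a ℓ' else 0 := by
        intro ℓ'
        rw [← Finset.mul_sum, horth]
        split <;> simp
      simp only [key]
      rw [Finset.sum_ite_eq]
      simp [sq]
    have hsum : ∑ ℓ ∈ Finset.univ.erase 0, a ℓ ^ 2 = ∑ ℓ, a ℓ ^ 2 :=
      Finset.sum_erase Finset.univ (f := fun ℓ => a ℓ ^ 2) (a := 0) (by simp [ha0])
    rw [horthsum, ← hsum, Finset.mul_sum]
    refine Finset.sum_congr rfl fun ℓ _ => ?_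
    rw [hψb ℓ]
    have hSq : (Real.sqrt S * b ℓ) ^ 2 = S * b ℓ ^ 2 := by
      rw [mul_pow, Real.sq_sqrt hSpos.le]
    rw [hSq]
    simp only [ha]
    ring
end
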